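/- If L is a finite dismantlable lattice and f : L → M is a surjective lattice homomorphism onto a lattice M, then M is dismantlable. -/

import Mathlib

/-- A finite lattice `L` with `n` elements is *dismantlable* if there is a chain
`L₁ ⊆ L₂ ⊆ ... ⊆ Lₙ = L` of sublattices of `L` with `|Lᵢ| = i` for `i = 1, ..., n`. -/
def Dismantlable (L : Type*) [Lattice L] [Finite L] : Prop :=
  ∃ c : ℕ → Set L,
    (∀ i, 1 ≤ i → i ≤ Nat.card L → IsSublattice (c i) ∧ Nat.card (c i) = i) ∧
    (∀ i, 1 ≤ i → i < Nat.card L → c i ⊆ c (i + 1)) ∧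
    c (Nat.card L) = Set.univ

/-- `x 0, y 0, x 1, y 1, ..., x (n-1), y (n-1)` form a *crown of order `2n`* (for `n ≥ 3`)
in a poset: the `2n` elements are pairwise distinct, and the only comparability relations
among them are `x i ≤ y i` and `x (i+1) ≤ y i` (indices mod `n`). -/
def IsCrown {P : Type*} [PartialOrder P] {n : ℕ} (x y : Fin n → P) : Prop :=
  3 ≤ n ∧ Function.Injective x ∧ Function.Injective y ∧
  (∀ i j, x i ≠ y j) ∧
  (∀ i j, x i ≤ x j → i = j) ∧
  (∀ i j, y i ≤ y j → i = j) ∧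
  (∀ i j, ¬ y i ≤ x j) ∧
  (∀ i j, x i ≤ y j ↔ (i = j ∨ (i : ℕ) = ((j : ℕ) + 1) % n))

open Set


universe u v

lemma dismantlable_of_card_le_one {M : Type*} [Lattice M] [Finite M]
    (h : Nat.card M ≤ 1) : Dismantlable M := by
  refine ⟨fun _ => Set.univ, ?_, fun _ _ _ => subset_rfl, rfl⟩
  intro i hi1 hi2
  have hM : Nat.card M = 1 := le_antisymm h (hi1.trans hi2)
  have hi : i = 1 := le_antisymm (hi2.trans h) hi1
  refine ⟨isSublattice_univ, ?_⟩
  rw [Nat.card_coe_set_eq, Set.ncard_univ, hM, hi]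

lemma main_aux : ∀ n : ℕ, ∀ {L : Type u} {M : Type v} [Lattice L] [Finite L] [Lattice M]
    [Finite M], Nat.card L ≤ n → Dismantlable L → ∀ f : LatticeHom L M,
    Function.Surjective f → Dismantlable M := by
  intro n
  induction n using Nat.strong_induction_on with
  | _ n IH =>
    intro L M _ _ _ _ hLn hL f hf
    by_cases hM1 : Nat.card M ≤ 1
    · exact dismantlable_of_card_le_one hM1
    push_neg at hM1
    have hML : Nat.card M ≤ Nat.card L := Nat.card_le_card_of_surjective f hf
    set nL := Nat.card L with hnL
    have hnL2 : 2 ≤ nL := hM1.trans_le hML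
    obtain ⟨c, h1, h2, h3⟩ := hL
    set k := nL - 1 with hk
    have hk1 : 1 ≤ k := by omega
    have hkk : k + 1 = nL := by omega
    have hkn : k < nL := by omega
    -- monotonicity of the chain
    have hmono : ∀ i j, 1 ≤ i → i ≤ j → j ≤ nL → c i ⊆ c j := by
      intro i j hi hij hj
      induction j with
      | zero => omega
      | succ j IHj =>
        rcases Nat.lt_or_ge i (j+1) with hlt | hge
        · exact (IHj (by omega) (by omega)).trans (h2 j (by omega) (by omega))
        · have : i = j + 1 := by omega
          subst this; exact subset_rfl
    obtain ⟨hsub, hcard⟩ := h1 k hk1 (le_of_lt hkn)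
    set S : Sublattice L := Sublattice.ofIsSublattice (c k) hsub with hS
    have hScoe : (S : Set L) = c k := rfl
    have hScard : Nat.card S = k := hcard
    -- S is dismantlable
    have hSdis : Dismantlable S := by
      refine ⟨fun i => Subtype.val ⁻¹' c i, ?_, ?_, ?_⟩
      · intro i hi1 hi2
        rw [hScard] at hi2
        obtain ⟨hsubi, hcardi⟩ := h1 i hi1 (hi2.trans (le_of_lt hkn))
        have hsubset : c i ⊆ c k := hmono i k hi1 hi2 (le_of_lt hkn)
        constructor
        · constructor
          · intro a ha b hb
            show ((a ⊔ b : S) : L) ∈ c i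
            rw [Sublattice.coe_sup]
            exact hsubi.1 ha hb
          · intro a ha b hb
            show ((a ⊓ b : S) : L) ∈ c i
            rw [Sublattice.coe_inf]
            exact hsubi.2 ha hb
        · rw [Nat.card_coe_set_eq,
            Set.ncard_preimage_of_injective_subset_range Subtype.coe_injective
              (by rw [Subtype.range_coe_subtype]; exact fun x hx => hsubset hx),
            ← Nat.card_coe_set_eq, hcardi]
      · intro i hi1 hi2
        rw [hScard] at hi2
        exact Set.preimage_mono (h2 i hi1 (by omega))
      · rw [hScard]
        ext x
        simp only [Set.mem_preimage, Set.mem_univ, iff_true]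
        exact x.2
    -- the missing element a
    have hck_card : (c k).ncard = k := by rw [← Nat.card_coe_set_eq, hcard]
    have hck_ne : c k ≠ univ := by
      intro h
      rw [h, Set.ncard_univ] at hck_card
      omega
    obtain ⟨a, ha⟩ : ∃ a, a ∉ c k := by
      by_contra h
      push_neg at h
      exact hck_ne (Set.eq_univ_of_forall h)
    have hins : insert a (c k) = univ := by
      apply Set.eq_of_subset_of_ncard_le (Set.subset_univ _)
      rw [Set.ncard_univ, Set.ncard_insert_of_notMem ha (Set.toFinite _), hck_card]
      omega
    set M' : Sublattice M := S.map f with hM'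
    have hM'coe : (M' : Set M) = f '' c k := by
      rw [hM']; rfl
    by_cases hcase : (M' : Set M) = univ
    · -- Case A : restrict f to S, still surjective
      let g : LatticeHom S M :=
        { toFun := fun x => f ↑x
          map_sup' := fun a b => by
            show f ↑(a ⊔ b) = f ↑a ⊔ f ↑b
            rw [Sublattice.coe_sup, map_sup]
          map_inf' := fun a b => by
            show f ↑(a ⊓ b) = f ↑a ⊓ f ↑b
            rw [Sublattice.coe_inf, map_inf] }
      have hg : Function.Surjective g := by
        intro m
        have : m ∈ (M' : Set M) := hcase ▸ Set.mem_univ m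
        rw [hM'coe] at this
        obtain ⟨x, hx, hfx⟩ := this
        exact ⟨⟨x, hx⟩, hfx⟩
      exact IH k (by omega) (le_of_eq hScard) hSdis g hg
    · -- Case B : f '' c k misses exactly f a
      have hfa : f a ∉ (M' : Set M) := by
        intro hmem
        apply hcase
        have : f '' (univ : Set L) = (M' : Set M) := by
          rw [← hins, Set.image_insert_eq, hM'coe, Set.insert_eq_of_mem (hM'coe ▸ hmem)]
        rw [← this, Set.image_univ, Set.range_eq_univ.mpr hf]
      have huniv : insert (f a) (M' : Set M) = univ := by
        rw [hM'coe, ← Set.image_insert_eq, hins, Set.image_univ,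
          Set.range_eq_univ.mpr hf]
      have hM'card : Nat.card M' = Nat.card M - 1 := by
        have h1' : (insert (f a) (M' : Set M)).ncard = (M' : Set M).ncard + 1 :=
          Set.ncard_insert_of_notMem hfa (Set.toFinite _)
        rw [huniv, Set.ncard_univ] at h1'
        have e : Nat.card M' = ((M' : Set M)).ncard := Nat.card_coe_set_eq _
        omega
      -- restricted hom onto M'
      let g : LatticeHom S M' :=
        { toFun := fun x => ⟨f ↑x, Sublattice.mem_map.mpr ⟨↑x, x.2, rfl⟩⟩
          map_sup' := fun a b => by
            apply Subtype.ext
            show f ↑(a ⊔ b) = (((⟨f ↑a, _⟩ : M') ⊔ ⟨f ↑b, _⟩ : M') : M)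
            rw [Sublattice.coe_sup, Sublattice.coe_sup, map_sup]
          map_inf' := fun a b => by
            apply Subtype.ext
            show f ↑(a ⊓ b) = (((⟨f ↑a, _⟩ : M') ⊓ ⟨f ↑b, _⟩ : M') : M)
            rw [Sublattice.coe_inf, Sublattice.coe_inf, map_inf] }
      have hg : Function.Surjective g := by
        rintro ⟨y, hy⟩
        obtain ⟨x, hx, hfx⟩ := Sublattice.mem_map.mp hy
        exact ⟨⟨x, hx⟩, Subtype.ext hfx⟩
      have hM'dis : Dismantlable M' := IH k (by omega) (le_of_eq hScard) hSdis g hg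
      -- extend the chain of M' by one step
      obtain ⟨d, hd1, hd2, hd3⟩ := hM'dis
      rw [hM'card] at hd1 hd2 hd3
      have hm2 : 2 ≤ Nat.card M := hM1
      refine ⟨fun i => if i ≤ Nat.card M - 1 then Subtype.val '' d i else univ, ?_, ?_, ?_⟩
      · intro i hi1 hi2
        dsimp only
        by_cases hle : i ≤ Nat.card M - 1
        · rw [if_pos hle]
          obtain ⟨hsubi, hcardi⟩ := hd1 i hi1 hle
          constructor
          · constructor
            · rintro x ⟨x', hx', rfl⟩ y ⟨y', hy', rfl⟩
              exact ⟨x' ⊔ y', hsubi.1 hx' hy', (Sublattice.coe_sup x' y').symm⟩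
            · rintro x ⟨x', hx', rfl⟩ y ⟨y', hy', rfl⟩
              exact ⟨x' ⊓ y', hsubi.2 hx' hy', (Sublattice.coe_inf x' y').symm⟩
          · rw [Nat.card_coe_set_eq,
              Set.ncard_image_of_injective _ Subtype.coe_injective,
              ← Nat.card_coe_set_eq, hcardi]
        · rw [if_neg hle]
          have : i = Nat.card M := by omega
          subst this
          exact ⟨isSublattice_univ, by rw [Nat.card_coe_set_eq, Set.ncard_univ]⟩
      · intro i hi1 hi2
        dsimp only
        by_cases hle : i + 1 ≤ Nat.card M - 1
        · rw [if_pos (by omega), if_pos hle]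
          exact Set.image_mono (hd2 i hi1 (by omega))
        · simp only [if_neg hle]
          exact Set.subset_univ _
      · dsimp only
        rw [if_neg (by omega)]


/-- The image of a finite dismantlable lattice under a surjective lattice
homomorphism is dismantlable. -/
theorem stmt2 {L M : Type*} [Lattice L] [Finite L] [Lattice M] [Finite M]
    (hL : Dismantlable L) (f : LatticeHom L M) (hf : Function.Surjective f) :
    Dismantlable M :=
  main_aux (Nat.card L) le_rfl hL f hf
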